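/- Let λ ∈ (0,1) and t > 0 with λ^t = 1/2, and let m_t be the (t, log ψ(t))-conformal Borel probability measure on (0,1] with m_t(W_k) = (1/2)^k for all k ≥ 1, where ψ(t) = (1−λ)^t/(1−λ^t). Then m_t is conservative for F_λ, but there exists no F_λ-invariant Borel probability measure that is absolutely continuous with respect to m_t; that is, the system ((0,1], F_λ, −t log|F_λ'|) is null recurrent. -/

import Mathlib

open MeasureTheory Set Filter Topology

/-- The Markov partition interval `W n = (lam^n, lam^(n-1)]` for `n ≥ 1`. -/
noncomputable def Wint (lam : ℝ) (n : ℕ) : Set ℝ := Set.Ioc (lam ^ n) (lam ^ (n - 1))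

/-- The map `F_lam : (0,1] → (0,1]`, extended by the identity outside `(0,1]`.
On `W n` it is `x ↦ (x - lam^n)/(lam(1-lam))` for `n ≥ 2` and
`x ↦ (x - lam)/(1-lam)` on `W 1`; for `x ∈ (0,1]` the branch index is
the least `n` with `lam^n < x`. -/
noncomputable def Flam (lam : ℝ) (x : ℝ) : ℝ :=
  if 0 < x ∧ x ≤ 1 then
    if sInf {n : ℕ | lam ^ n < x} = 1 then (x - lam) / (1 - lam)
    else (x - lam ^ sInf {n : ℕ | lam ^ n < x}) / (lam * (1 - lam))
  else x

/-- The slope of `F_lam` on the branch `W n`. -/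
noncomputable def slopeW (lam : ℝ) (n : ℕ) : ℝ :=
  if n = 1 then 1 / (1 - lam) else 1 / (lam * (1 - lam))

/-- A Borel measure `m` on `(0,1]` is `(t,p)`-conformal for `F_lam` if for every
branch `W n` and every Borel `A ⊆ W n` one has `m(F_lam(A)) = e^p * s_n^t * m(A)`. -/
def IsConformal (lam t p : ℝ) (m : Measure ℝ) : Prop :=
  ∀ n : ℕ, 1 ≤ n → ∀ A : Set ℝ, MeasurableSet A → A ⊆ Wint lam n →
    m (Flam lam '' A) = ENNReal.ofReal (Real.exp p * slopeW lam n ^ t) * m A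

/-- A set is wandering for `F_lam` if its preimages under all iterates are
pairwise disjoint. -/
def IsWanderingSet (lam : ℝ) (A : Set ℝ) : Prop :=
  Pairwise fun i j : ℕ => Disjoint ((Flam lam)^[i] ⁻¹' A) ((Flam lam)^[j] ⁻¹' A)


open scoped ENNReal NNReal

namespace S10

variable {m : MeasureTheory.Measure ℝ}

noncomputable def idxF (lam x : ℝ) : ℕ := sInf {n : ℕ | lam ^ n < x}

noncomputable def Iim (lam : ℝ) (k : ℕ) : Set ℝ := Set.Ioc 0 (lam ^ (k - 2))

variable {lam t : ℝ}

lemma W_subset_Ioc (h1 : 0 < lam) (h2 : lam < 1) {k : ℕ} (hk : 1 ≤ k) :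
    Wint lam k ⊆ Set.Ioc 0 1 := by
  intro x hx
  exact ⟨lt_trans (pow_pos h1 k) hx.1, hx.2.trans (pow_le_one₀ h1.le h2.le)⟩

lemma idx_spec (h1 : 0 < lam) (h2 : lam < 1) {x : ℝ} (hx : x ∈ Set.Ioc (0:ℝ) 1) :
    1 ≤ idxF lam x ∧ x ∈ Wint lam (idxF lam x) := by
  have hne : {n : ℕ | lam ^ n < x}.Nonempty := exists_pow_lt_of_lt_one hx.1 h2
  have hmem : lam ^ idxF lam x < x := Nat.sInf_mem hne
  have hge : 1 ≤ idxF lam x := by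
    rcases Nat.eq_zero_or_pos (idxF lam x) with h | h
    · exfalso
      rw [h, pow_zero] at hmem
      exact absurd hx.2 (not_le.2 hmem)
    · exact h
  have hnot : idxF lam x - 1 ∉ {n : ℕ | lam ^ n < x} :=
    Nat.notMem_of_lt_sInf (show idxF lam x - 1 < idxF lam x by omega)
  exact ⟨hge, hmem, not_lt.1 hnot⟩

lemma idx_eq (h1 : 0 < lam) (h2 : lam < 1) {k : ℕ} {x : ℝ} (hk : 1 ≤ k)
    (hx : x ∈ Wint lam k) : idxF lam x = k := by
  have hle : idxF lam x ≤ k := Nat.sInf_le hx.1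
  by_contra h
  have hlt : idxF lam x < k := lt_of_le_of_ne hle h
  have hmem' : idxF lam x ∈ {n : ℕ | lam ^ n < x} := Nat.sInf_mem ⟨k, hx.1⟩
  have hmem : lam ^ idxF lam x < x := hmem'
  have hle2 : x ≤ lam ^ idxF lam x :=
    hx.2.trans (pow_le_pow_of_le_one h1.le h2.le (by omega))
  linarith

lemma iUnion_W (h1 : 0 < lam) (h2 : lam < 1) :
    (⋃ k : ℕ, Wint lam (k+1)) = Set.Ioc 0 1 := by
  ext x
  constructor
  · intro hx
    obtain ⟨k, hk⟩ := mem_iUnion.1 hx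
    exact W_subset_Ioc h1 h2 (by omega) hk
  · intro hx
    obtain ⟨hge, hW⟩ := idx_spec h1 h2 hx
    exact mem_iUnion.2 ⟨idxF lam x - 1, by rwa [Nat.sub_add_cancel hge]⟩

lemma W_disj (h1 : 0 < lam) (h2 : lam < 1) :
    Pairwise (Function.onFun Disjoint fun k : ℕ => Wint lam (k+1)) := by
  intro i j hij
  refine Set.disjoint_left.2 fun x hxi hxj => hij ?_
  have h1' := idx_eq h1 h2 (by omega) hxi
  have h2' := idx_eq h1 h2 (by omega) hxj
  omega

lemma idx_meas (h1 : 0 < lam) (h2 : lam < 1) : Measurable (idxF lam) := by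
  apply measurable_to_countable'
  intro k
  match k with
  | 0 =>
    have : idxF lam ⁻¹' {0} = Set.Iic 0 ∪ Set.Ioi 1 := by
      ext x
      simp only [mem_preimage, mem_singleton_iff, mem_union, mem_Iic, mem_Ioi]
      constructor
      · intro h
        by_contra hc
        push_neg at hc
        have := (idx_spec h1 h2 ⟨hc.1, hc.2⟩).1
        omega
      · rintro (h | h)
        · have he : {n : ℕ | lam ^ n < x} = ∅ := by
            ext n
            simp only [mem_setOf_eq, mem_empty_iff_false, iff_false, not_lt]
            exact h.trans (pow_pos h1 n).le
          rw [idxF, he, Nat.sInf_empty]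
        · have : (0:ℕ) ∈ {n : ℕ | lam ^ n < x} := by simpa using h
          exact Nat.le_zero.1 (Nat.sInf_le this)
    rw [this]
    exact measurableSet_Iic.union measurableSet_Ioi
  | (k+1) =>
    have : idxF lam ⁻¹' {k+1} = Set.Ioc (lam ^ (k+1)) (lam ^ k) := by
      ext x
      simp only [mem_preimage, mem_singleton_iff, mem_Ioc]
      constructor
      · intro h
        have hne : {n : ℕ | lam ^ n < x}.Nonempty := by
          by_contra hc
          rw [not_nonempty_iff_eq_empty] at hc
          rw [idxF, hc, Nat.sInf_empty] at h
          omega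
        have hmem : lam ^ idxF lam x < x := Nat.sInf_mem hne
        rw [h] at hmem
        have hk2 : k ∉ {n : ℕ | lam ^ n < x} :=
          Nat.notMem_of_lt_sInf (show k < idxF lam x by omega)
        exact ⟨hmem, not_lt.1 hk2⟩
      · intro hx
        exact idx_eq h1 h2 (by omega) hx
    rw [this]
    exact measurableSet_Ioc

lemma flam_meas (h1 : 0 < lam) (h2 : lam < 1) : Measurable (Flam lam) := by
  have hrw : Flam lam = fun x =>
      if 0 < x ∧ x ≤ 1 then
        (if idxF lam x = 1 then (x - lam) / (1 - lam)
         else (x - lam ^ idxF lam x) / (lam * (1 - lam)))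
      else x := rfl
  rw [hrw]
  have hset : MeasurableSet {x : ℝ | 0 < x ∧ x ≤ 1} :=
    (measurableSet_Ioc : MeasurableSet (Set.Ioc (0:ℝ) 1))
  apply Measurable.ite hset
  · apply Measurable.ite ((idx_meas h1 h2) (measurableSet_singleton 1))
    · exact (measurable_id.sub_const lam).div_const _
    · have hpow : Measurable fun x => lam ^ idxF lam x :=
        measurable_from_top.comp (idx_meas h1 h2)
      exact (measurable_id.sub hpow).div_const _
  · exact measurable_id


lemma flam_W1 (h1 : 0 < lam) (h2 : lam < 1) {x : ℝ} (hx : x ∈ Wint lam 1) :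
    Flam lam x = (x - lam) / (1 - lam) := by
  have hx1 : x ∈ Set.Ioc (0:ℝ) 1 := W_subset_Ioc h1 h2 le_rfl hx
  have hidx : sInf {n : ℕ | lam ^ n < x} = 1 := idx_eq h1 h2 le_rfl hx
  rw [Flam, if_pos ⟨hx1.1, hx1.2⟩, if_pos hidx]

lemma flam_W2 (h1 : 0 < lam) (h2 : lam < 1) {s : ℕ} {x : ℝ} (hx : x ∈ Wint lam (s+2)) :
    Flam lam x = (x - lam ^ (s+2)) / (lam * (1 - lam)) := by
  have hx1 : x ∈ Set.Ioc (0:ℝ) 1 := W_subset_Ioc h1 h2 (by omega) hx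
  have hidx : sInf {n : ℕ | lam ^ n < x} = s + 2 := idx_eq h1 h2 (by omega) hx
  rw [Flam, if_pos ⟨hx1.1, hx1.2⟩, if_neg (by omega), hidx]

lemma img_W1 (h1 : 0 < lam) (h2 : lam < 1) :
    Flam lam '' (Wint lam 1) = Set.Ioc 0 1 := by
  have hd : (0:ℝ) < 1 - lam := by linarith
  ext y
  simp only [mem_image]
  constructor
  · rintro ⟨x, hx, rfl⟩
    obtain ⟨ha, hb⟩ := hx
    rw [pow_one] at ha
    rw [show (1:ℕ) - 1 = 0 from rfl, pow_zero] at hb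
    rw [flam_W1 h1 h2 ⟨by rwa [pow_one], by rwa [pow_zero]⟩]
    exact ⟨div_pos (by linarith) hd, (div_le_one hd).2 (by linarith)⟩
  · intro hy
    have hmem : y * (1 - lam) + lam ∈ Wint lam 1 := by
      constructor
      · rw [pow_one]; nlinarith [hy.1]
      · rw [show (1:ℕ) - 1 = 0 from rfl, pow_zero]; nlinarith [hy.2]
    refine ⟨y * (1 - lam) + lam, hmem, ?_⟩
    rw [flam_W1 h1 h2 hmem]
    field_simp
    ring

lemma img_W2 (h1 : 0 < lam) (h2 : lam < 1) (s : ℕ) :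
    Flam lam '' (Wint lam (s+2)) = Set.Ioc 0 (lam ^ s) := by
  have hd : (0:ℝ) < lam * (1 - lam) := by nlinarith
  have hkey : lam ^ s * (lam * (1 - lam)) = lam ^ (s+1) - lam ^ (s+2) := by
    rw [pow_succ, pow_succ]; ring
  ext y
  simp only [mem_image]
  constructor
  · rintro ⟨x, hx, rfl⟩
    obtain ⟨ha, hb⟩ := hx
    rw [show s + 2 - 1 = s + 1 from rfl] at hb
    rw [flam_W2 h1 h2 ⟨ha, by rwa [show s + 2 - 1 = s + 1 from rfl]⟩]
    constructor
    · exact div_pos (by linarith) hd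
    · rw [div_le_iff₀ hd, hkey]; linarith
  · intro hy
    have hmem : y * (lam * (1 - lam)) + lam ^ (s+2) ∈ Wint lam (s+2) := by
      constructor
      · nlinarith [hy.1]
      · rw [show s + 2 - 1 = s + 1 from rfl]
        nlinarith [hy.2]
    refine ⟨y * (lam * (1 - lam)) + lam ^ (s+2), hmem, ?_⟩
    rw [flam_W2 h1 h2 hmem]
    field_simp
    rw [div_eq_iff (sub_ne_zero.2 h2.ne')]; ring

lemma img_W (h1 : 0 < lam) (h2 : lam < 1) (k : ℕ) :
    Flam lam '' (Wint lam (k+1)) = Iim lam (k+1) := by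
  cases k with
  | zero =>
    rw [img_W1 h1 h2, Iim]
    norm_num
  | succ s =>
    rw [img_W2 h1 h2 s, Iim, show s + 1 + 1 - 2 = s from rfl]

lemma flam_mem (h1 : 0 < lam) (h2 : lam < 1) {x : ℝ} (hx : x ∈ Set.Ioc (0:ℝ) 1) :
    Flam lam x ∈ Set.Ioc (0:ℝ) 1 := by
  obtain ⟨hge, hW⟩ := idx_spec h1 h2 hx
  obtain ⟨k, hk⟩ : ∃ k, idxF lam x = k + 1 := ⟨idxF lam x - 1, by omega⟩
  rw [hk] at hW
  have himg : Flam lam x ∈ Iim lam (k+1) := by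
    rw [← img_W h1 h2 k]
    exact mem_image_of_mem _ hW
  exact ⟨himg.1, himg.2.trans (pow_le_one₀ h1.le h2.le)⟩

lemma flam_id {x : ℝ} (hx : x ∉ Set.Ioc (0:ℝ) 1) : Flam lam x = x := by
  rw [Flam, if_neg (by simpa [Set.mem_Ioc] using hx)]

lemma flam_pre (h1 : 0 < lam) (h2 : lam < 1) :
    Flam lam ⁻¹' (Set.Ioc 0 1) = Set.Ioc 0 1 := by
  ext x
  constructor
  · intro h
    by_contra hx
    rw [mem_preimage, flam_id hx] at h
    exact hx h
  · exact fun hx => flam_mem h1 h2 hx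

lemma flam_pre_iter (h1 : 0 < lam) (h2 : lam < 1) (j : ℕ) :
    (Flam lam)^[j] ⁻¹' (Set.Ioc 0 1) = Set.Ioc 0 1 := by
  induction j with
  | zero => simp
  | succ j ih =>
    rw [Function.iterate_succ', Set.preimage_comp, flam_pre h1 h2, ih]

-- conformal coefficients
lemma kappa1 (h1 : 0 < lam) (h2 : lam < 1) (hl : lam ^ t = 1/2) :
    ENNReal.ofReal (Real.exp (Real.log ((1-lam)^t / (1 - lam^t))) * slopeW lam 1 ^ t) = 2 := by
  have h1l : (0:ℝ) < 1 - lam := by linarith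
  have hpos : (0:ℝ) < (1-lam)^t := Real.rpow_pos_of_pos h1l t
  have hhalf : 1 - lam^t = 1/2 := by rw [hl]; norm_num
  have hargpos : 0 < (1-lam)^t / (1 - lam^t) := by rw [hhalf]; positivity
  rw [Real.exp_log hargpos, slopeW, if_pos rfl, one_div, Real.inv_rpow h1l.le, hhalf]
  have : (1-lam)^t / (1/2 : ℝ) * ((1-lam)^t)⁻¹ = 2 := by
    field_simp
  rw [this]
  exact ENNReal.ofReal_ofNat 2

lemma kappa2 (h1 : 0 < lam) (h2 : lam < 1) (hl : lam ^ t = 1/2) {n : ℕ} (hn : n ≠ 1) :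
    ENNReal.ofReal (Real.exp (Real.log ((1-lam)^t / (1 - lam^t))) * slopeW lam n ^ t) = 4 := by
  have h1l : (0:ℝ) < 1 - lam := by linarith
  have hpos : (0:ℝ) < (1-lam)^t := Real.rpow_pos_of_pos h1l t
  have hhalf : 1 - lam^t = 1/2 := by rw [hl]; norm_num
  have hargpos : 0 < (1-lam)^t / (1 - lam^t) := by rw [hhalf]; positivity
  rw [Real.exp_log hargpos, slopeW, if_neg hn, one_div,
    Real.inv_rpow (by positivity), Real.mul_rpow h1.le h1l.le, hhalf, hl]
  have : (1-lam)^t / (1/2 : ℝ) * ((1/2 : ℝ) * (1-lam)^t)⁻¹ = 4 := by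
    field_simp
    ring
  rw [this]
  exact ENNReal.ofReal_ofNat 4


/-- one-step conformality -/
lemma os (h1 : 0 < lam) (h2 : lam < 1) (hl : lam ^ t = 1/2)
    (hconf : IsConformal lam t (Real.log ((1-lam)^t / (1 - lam^t))) m)
    {B : Set ℝ} (hB : MeasurableSet B) (k : ℕ) :
    m (B ∩ Iim lam (k+1))
      = (if k = 0 then 2 else 4) * m (Wint lam (k+1) ∩ Flam lam ⁻¹' B) := by
  have hA : MeasurableSet (Wint lam (k+1) ∩ Flam lam ⁻¹' B) :=
    measurableSet_Ioc.inter ((flam_meas h1 h2) hB)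
  have hc := hconf (k+1) (by omega) _ hA inter_subset_left
  rw [Set.image_inter_preimage, img_W h1 h2 k] at hc
  rw [inter_comm, hc]
  congr 1
  cases k with
  | zero => rw [if_pos rfl]; exact kappa1 h1 h2 hl
  | succ s => rw [if_neg (by omega)]; exact kappa2 h1 h2 hl (by omega)

/-- the transfer density coefficients -/
noncomputable def om (j k : ℕ) : ℝ≥0∞ := (Nat.choose (k + 2*j) j : ℝ≥0∞) / 4^j

noncomputable def tau (j k : ℕ) : ℝ≥0∞ :=
  ((if k = 0 then 2 else 1) * Nat.choose (k+1+2*j) j : ℕ) / 4^(j+1)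

lemma hdiv (a : ℝ≥0∞) (j : ℕ) : a / 4^(j+1) * 4 = a / 4^j := by
  have h : (4:ℝ≥0∞)⁻¹ * 4 = 1 := ENNReal.inv_mul_cancel (by norm_num) (by norm_num)
  calc a / 4^(j+1) * 4 = a * (4^j)⁻¹ * (4⁻¹ * 4) := by
        rw [pow_succ, div_eq_mul_inv,
          ENNReal.mul_inv (Or.inl (pow_ne_zero j (by norm_num)))
            (Or.inl (ENNReal.pow_ne_top (by norm_num)))]
        ring
    _ = a / 4^j := by rw [h, mul_one, div_eq_mul_inv]

lemma cid (j k : ℕ) : tau j k * (if k = 0 then (2:ℝ≥0∞) else 4) = om j (k+1) := by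
  cases k with
  | zero =>
    rw [if_pos rfl, tau, if_pos rfl, om]
    have hc : ((2 * Nat.choose (0+1+2*j) j : ℕ) : ℝ≥0∞)
        = (Nat.choose (1 + 2*j) j : ℝ≥0∞) * 2 := by
      push_cast
      ring
    rw [hc]
    rw [show (Nat.choose (1 + 2*j) j : ℝ≥0∞) * 2 / 4^(j+1) * 2
        = (Nat.choose (1 + 2*j) j : ℝ≥0∞) / 4^(j+1) * 4 by
      rw [div_eq_mul_inv, div_eq_mul_inv]; ring]
    rw [hdiv]
  | succ s =>
    rw [if_neg (by omega), tau, if_neg (by omega), om]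
    rw [show ((1 * Nat.choose (s+1+1+2*j) j : ℕ) : ℝ≥0∞)
        = (Nat.choose (s+1+1+2*j) j : ℝ≥0∞) by push_cast; ring]
    rw [show s+1+1+2*j = s+1+1 + 2*j from rfl]
    rw [hdiv]

lemma NID (j l : ℕ) :
    ∑ k ∈ Finset.range (l+1), (if k = 0 then 2 else 1) * Nat.choose (k+1+2*j) j
      = Nat.choose (l + 2*(j+1)) (j+1) := by
  induction l with
  | zero =>
    rw [Finset.sum_range_one, if_pos rfl]
    have hs : (2*j+1).choose (j+1) = (2*j+1).choose j := by
      have := Nat.choose_symm (n := 2*j+1) (k := j+1) (by omega)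
      rw [show 2*j+1 - (j+1) = j by omega] at this
      exact this.symm
    have hp : (2*j+2).choose (j+1) = (2*j+1).choose j + (2*j+1).choose (j+1) :=
      Nat.choose_succ_succ (2*j+1) j
    rw [show 0 + 2*(j+1) = 2*j+2 by ring, hp, hs,
      show 0+1+2*j = 2*j+1 by ring]
    ring
  | succ l ih =>
    rw [Finset.sum_range_succ, ih, if_neg (by omega)]
    have hp : (l + 2*j + 3).choose (j+1)
        = (l + 2*j + 2).choose j + (l + 2*j + 2).choose (j+1) :=
      Nat.choose_succ_succ (l + 2*j + 2) j
    rw [show l + 1 + 2*(j+1) = l + 2*j + 3 by ring, hp,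
      show l + 2*(j+1) = l + 2*j + 2 by ring,
      show l + 1 + 1 + 2*j = l + 2*j + 2 by ring]
    ring

lemma FI (j l : ℕ) : ∑ k ∈ Finset.range (l+1), tau j k = om (j+1) l := by
  unfold tau om
  simp only [div_eq_mul_inv]
  rw [← Finset.sum_mul, ← Nat.cast_sum, NID j l]

lemma om_meas (h1 : 0 < lam) (h2 : lam < 1) (j : ℕ) :
    Measurable fun x => om j (idxF lam x) :=
  (measurable_from_top (f := fun k => om j k)).comp (idx_meas h1 h2)

lemma piece (h1 : 0 < lam) (h2 : lam < 1) (j k : ℕ) {C : Set ℝ}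
    (hC : MeasurableSet C) (hsub : C ⊆ Wint lam (k+1)) :
    ∫⁻ x in C, om j (idxF lam x) ∂m = om j (k+1) * m C := by
  rw [setLIntegral_congr_fun hC (fun x hx =>
    (by rw [idx_eq h1 h2 (by omega) (hsub hx)] :
      om j (idxF lam x) = om j (k+1)))]
  exact setLIntegral_const C _

lemma levels (h1 : 0 < lam) (h2 : lam < 1) (j : ℕ) {C : Set ℝ}
    (hC : MeasurableSet C) (hC1 : C ⊆ Set.Ioc 0 1) :
    ∫⁻ x in C, om j (idxF lam x) ∂m
      = ∑' k : ℕ, om j (k+1) * m (C ∩ Wint lam (k+1)) := by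
  have hCeq : C = ⋃ k : ℕ, C ∩ Wint lam (k+1) := by
    rw [← Set.inter_iUnion, iUnion_W h1 h2, inter_eq_left.2 hC1]
  calc ∫⁻ x in C, om j (idxF lam x) ∂m
      = ∫⁻ x in ⋃ k : ℕ, C ∩ Wint lam (k+1), om j (idxF lam x) ∂m := by rw [← hCeq]
    _ = ∑' k : ℕ, ∫⁻ x in C ∩ Wint lam (k+1), om j (idxF lam x) ∂m :=
        lintegral_iUnion (fun k => hC.inter measurableSet_Ioc)
          ((W_disj h1 h2).mono fun i j h => h.mono inter_subset_right inter_subset_right) _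
    _ = ∑' k : ℕ, om j (k+1) * m (C ∩ Wint lam (k+1)) :=
        tsum_congr fun k => piece h1 h2 j k (hC.inter measurableSet_Ioc) inter_subset_right

lemma ptwise (h1 : 0 < lam) (h2 : lam < 1) (j : ℕ) {x : ℝ} (hx : x ∈ Set.Ioc (0:ℝ) 1) :
    ∑' k : ℕ, (Iim lam (k+1)).indicator (fun _ => tau j k) x
      = om (j+1) (idxF lam x) := by
  obtain ⟨hge, hW⟩ := idx_spec h1 h2 hx
  set l := idxF lam x with hldef
  have hind : ∀ k : ℕ, (Iim lam (k+1)).indicator (fun _ => tau j k) x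
      = if k ≤ l then tau j k else 0 := by
    intro k
    by_cases hk : k ≤ l
    · rw [if_pos hk, Set.indicator_of_mem]
      refine ⟨hx.1, ?_⟩
      cases k with
      | zero => simpa using hx.2
      | succ s =>
        rw [show s + 1 + 1 - 2 = s from rfl]
        have hxl : x ≤ lam ^ (l - 1) := hW.2
        exact hxl.trans (pow_le_pow_of_le_one h1.le h2.le (by omega))
    · rw [if_neg hk, Set.indicator_of_notMem]
      intro hmem
      obtain ⟨s, rfl⟩ : ∃ s, k = s + 1 := ⟨k - 1, by omega⟩
      rw [Iim, show s + 1 + 1 - 2 = s from rfl] at hmem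
      have hxl : lam ^ l < x := hW.1
      have : lam ^ s ≤ lam ^ l := pow_le_pow_of_le_one h1.le h2.le (by omega)
      have := hmem.2
      linarith
  rw [tsum_congr hind]
  rw [tsum_eq_sum (s := Finset.range (l+1))
    (fun k hk => if_neg (by simp only [Finset.mem_range] at hk; omega))]
  rw [Finset.sum_congr rfl (fun k hk => if_pos (by simp only [Finset.mem_range] at hk; omega))]
  exact FI j l

/-- the main transfer formula -/
lemma main (h1 : 0 < lam) (h2 : lam < 1) (hl : lam ^ t = 1/2)
    (hconf : IsConformal lam t (Real.log ((1-lam)^t / (1 - lam^t))) m) :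
    ∀ (j : ℕ) (B : Set ℝ), MeasurableSet B → B ⊆ Set.Ioc 0 1 →
      m ((Flam lam)^[j] ⁻¹' B) = ∫⁻ x in B, om j (idxF lam x) ∂m := by
  intro j
  induction j with
  | zero =>
    intro B hB hB1
    have hom : ∀ x : ℝ, om 0 (idxF lam x) = 1 := by
      intro x
      simp [om]
    simp only [hom, Function.iterate_zero, Set.preimage_id]
    rw [setLIntegral_one]
  | succ j ih =>
    intro B hB hB1
    have hBm' : MeasurableSet (Flam lam ⁻¹' B) := (flam_meas h1 h2) hB
    have hB1' : Flam lam ⁻¹' B ⊆ Set.Ioc 0 1 := by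
      rw [← flam_pre h1 h2]
      exact preimage_mono hB1
    rw [Function.iterate_succ', Set.preimage_comp, ih _ hBm' hB1',
      levels h1 h2 j hBm' hB1']
    have hstep : ∀ k : ℕ, om j (k+1) * m (Flam lam ⁻¹' B ∩ Wint lam (k+1))
        = tau j k * m (B ∩ Iim lam (k+1)) := by
      intro k
      rw [inter_comm, os h1 h2 hl hconf hB k, ← mul_assoc, cid j k]
    rw [tsum_congr hstep]
    have hind : ∀ k : ℕ, tau j k * m (B ∩ Iim lam (k+1))
        = ∫⁻ x in B, (Iim lam (k+1)).indicator (fun _ => tau j k) x ∂m := by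
      intro k
      have hI : MeasurableSet (Iim lam (k+1)) := measurableSet_Ioc
      rw [lintegral_indicator_const hI, Measure.restrict_apply hI, inter_comm]
    rw [tsum_congr hind,
      ← lintegral_tsum (f := fun (k : ℕ) (x : ℝ) => (Iim lam (k+1)).indicator (fun _ => tau j k) x)
        (fun k => (measurable_const.indicator
          (measurableSet_Ioc : MeasurableSet (Iim lam (k+1)))).aemeasurable)]
    exact setLIntegral_congr_fun hB (fun x hx => ptwise h1 h2 j (hB1 hx))


lemma four_pow_le (j : ℕ) : 4^j ≤ (2*j+1) * Nat.centralBinom j := by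
  cases j with
  | zero => simp [Nat.centralBinom]
  | succ i =>
    calc 4^(i+1) ≤ 2*(i+1) * Nat.centralBinom (i+1) :=
          Nat.four_pow_le_two_mul_self_mul_centralBinom (i+1) (by omega)
      _ ≤ (2*(i+1)+1) * Nat.centralBinom (i+1) := by
          exact Nat.mul_le_mul_right _ (by omega)

lemma om_low (j K : ℕ) : ((2*j+1 : ℕ) : ℝ≥0∞)⁻¹ ≤ om j (K+1) := by
  have hch : 4^j ≤ (2*j+1) * Nat.choose (K+1+2*j) j := by
    calc 4^j ≤ (2*j+1) * Nat.centralBinom j := four_pow_le j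
      _ ≤ (2*j+1) * Nat.choose (K+1+2*j) j := by
          apply Nat.mul_le_mul_left
          rw [Nat.centralBinom]
          exact Nat.choose_le_choose j (by omega)
  rw [om]
  rw [ENNReal.le_div_iff_mul_le (Or.inl (pow_ne_zero j (by norm_num)))
    (Or.inl (ENNReal.pow_ne_top (by norm_num)))]
  have hcast : ((2*j+1 : ℕ) : ℝ≥0∞)⁻¹ * 4^j
      ≤ ((2*j+1 : ℕ) : ℝ≥0∞)⁻¹ * (((2*j+1) * Nat.choose (K+1+2*j) j : ℕ) : ℝ≥0∞) := by
    apply mul_le_mul_right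
    rw [show ((4:ℝ≥0∞))^j = ((4^j : ℕ) : ℝ≥0∞) by push_cast; ring]
    exact Nat.cast_le.2 hch
  refine hcast.trans ?_
  rw [Nat.cast_mul, ← mul_assoc,
    ENNReal.inv_mul_cancel (by exact_mod_cast (by omega : 2*j+1 ≠ 0))
      (ENNReal.natCast_ne_top _), one_mul]

lemma harmonic_top : ∑' (j:ℕ), ((2*j+1 : ℕ) : ℝ≥0∞)⁻¹ = ⊤ := by
  by_contra hfin
  set f : ℕ → ℝ≥0 := fun j => ((2*j+1 : ℕ) : ℝ≥0)⁻¹ with hf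
  have hcoe : ∀ j, ((f j : ℝ≥0∞)) = ((2*j+1 : ℕ) : ℝ≥0∞)⁻¹ := by
    intro j
    rw [hf, ENNReal.coe_inv (by exact_mod_cast (by omega : 2*j+1 ≠ 0))]
    rfl
  rw [← tsum_congr hcoe] at hfin
  have hsummable : Summable f := ENNReal.tsum_coe_ne_top_iff_summable.1 hfin
  have hsummable' : Summable (fun j => ((2*j+1 : ℕ) : ℝ)⁻¹) := by
    have h := NNReal.summable_coe.2 hsummable
    refine h.congr fun j => ?_
    rw [hf]
    norm_cast
  have hhalf : Summable (fun j : ℕ => (2:ℝ)⁻¹ * ((j+1 : ℕ) : ℝ)⁻¹) := by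
    apply Summable.of_nonneg_of_le (fun j => by positivity) _ hsummable'
    intro j
    rw [mul_comm]
    rw [← mul_inv]
    apply inv_anti₀ (by positivity)
    push_cast
    linarith
  have h2 : Summable (fun j : ℕ => ((j+1 : ℕ) : ℝ)⁻¹) := by
    have := hhalf.mul_left (2:ℝ)
    refine this.congr fun j => ?_
    rw [← mul_assoc, mul_inv_cancel₀ (by norm_num), one_mul]
  have h3 : Summable (fun j : ℕ => ((j : ℕ) : ℝ)⁻¹) := by
    have : (fun j : ℕ => ((j+1 : ℕ) : ℝ)⁻¹) = fun j : ℕ => (((j : ℝ))+1)⁻¹ := by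
      funext j; push_cast; ring_nf
    rw [this] at h2
    exact (summable_nat_add_iff 1).1 (by exact_mod_cast h2)
  exact Real.not_summable_natCast_inv h3

lemma part1 (h1 : 0 < lam) (h2 : lam < 1) (hl : lam ^ t = 1/2)
    (hm : IsProbabilityMeasure m)
    (hmain : ∀ (j : ℕ) (B : Set ℝ), MeasurableSet B → B ⊆ Set.Ioc 0 1 →
      m ((Flam lam)^[j] ⁻¹' B) = ∫⁻ x in B, om j (idxF lam x) ∂m) :
    ∀ A : Set ℝ, MeasurableSet A → A ⊆ Set.Ioc 0 1 → IsWanderingSet lam A → m A = 0 := by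
  intro A hA hA1 hw
  by_contra h0
  have hex : ∃ K, m (A ∩ Wint lam (K+1)) ≠ 0 := by
    by_contra hall
    push_neg at hall
    apply h0
    have hAeq : A = ⋃ k : ℕ, A ∩ Wint lam (k+1) := by
      rw [← Set.inter_iUnion, iUnion_W h1 h2, inter_eq_left.2 hA1]
    rw [hAeq]
    refine le_antisymm ((measure_iUnion_le _).trans ?_) zero_le
    simp [hall]
  obtain ⟨K, hK⟩ := hex
  have hmeas : ∀ i : ℕ, MeasurableSet ((Flam lam)^[i] ⁻¹' A) :=
    fun i => ((flam_meas h1 h2).iterate i) hA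
  have hsum_le : ∑' i : ℕ, m ((Flam lam)^[i] ⁻¹' A) ≤ 1 := by
    rw [← measure_iUnion hw hmeas]
    exact prob_le_one
  have hlow : ∀ i : ℕ, ((2*i+1 : ℕ) : ℝ≥0∞)⁻¹ * m (A ∩ Wint lam (K+1))
      ≤ m ((Flam lam)^[i] ⁻¹' A) := by
    intro i
    rw [hmain i A hA hA1]
    calc ((2*i+1 : ℕ) : ℝ≥0∞)⁻¹ * m (A ∩ Wint lam (K+1))
        ≤ om i (K+1) * m (A ∩ Wint lam (K+1)) := mul_le_mul_left (om_low i K) _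
      _ = ∫⁻ x in A ∩ Wint lam (K+1), om i (idxF lam x) ∂m :=
          (piece h1 h2 i K (hA.inter measurableSet_Ioc) inter_subset_right).symm
      _ ≤ ∫⁻ x in A, om i (idxF lam x) ∂m := lintegral_mono_set inter_subset_left
  have htop : ∑' i : ℕ, ((2*i+1 : ℕ) : ℝ≥0∞)⁻¹ * m (A ∩ Wint lam (K+1)) = ⊤ := by
    rw [ENNReal.tsum_mul_right]
    exact ENNReal.mul_eq_top.2 (Or.inr ⟨harmonic_top, hK⟩)
  have : (⊤ : ℝ≥0∞) ≤ 1 := by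
    rw [← htop]
    exact (ENNReal.tsum_le_tsum hlow).trans hsum_le
  simp at this


lemma choose_le_two_pow (l j : ℕ) :
    Nat.choose (l + 2*j) j ≤ 2^l * Nat.centralBinom j := by
  induction l with
  | zero =>
    simp [Nat.centralBinom, Nat.zero_add]
  | succ l ih =>
    have hstep : Nat.choose (l + 1 + 2*j) j ≤ 2 * Nat.choose (l + 2*j) j := by
      cases j with
      | zero => simp
      | succ i =>
        have hp : (l + 2*(i+1)).choose i ≤ (l + 2*(i+1)).choose (i+1) :=
          Nat.choose_le_succ_of_lt_half_left (by omega)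
        have hps : (l + 2*(i+1) + 1).choose (i+1)
            = (l + 2*(i+1)).choose i + (l + 2*(i+1)).choose (i+1) :=
          Nat.choose_succ_succ _ i
        rw [show l + 1 + 2*(i+1) = l + 2*(i+1) + 1 by ring, hps]
        omega
    calc Nat.choose (l + 1 + 2*j) j ≤ 2 * Nat.choose (l + 2*j) j := hstep
      _ ≤ 2 * (2^l * Nat.centralBinom j) := Nat.mul_le_mul_left _ ih
      _ = 2^(l+1) * Nat.centralBinom j := by ring

lemma SB : ∀ j : ℕ, (Nat.centralBinom j)^2 * (2*j+1) ≤ 16^j := by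
  intro j
  induction j with
  | zero => simp [Nat.centralBinom]
  | succ i ih =>
    have key : (i+1) * Nat.centralBinom (i+1) = 2 * (2*i+1) * Nat.centralBinom i :=
      Nat.succ_mul_centralBinom_succ i
    have hsq : (i+1)^2 * ((Nat.centralBinom (i+1))^2 * (2*(i+1)+1))
        = (2*(2*i+1)*Nat.centralBinom i)^2 * (2*i+3) := by
      rw [← key]; ring
    have hineq : (2*(2*i+1)*Nat.centralBinom i)^2 * (2*i+3)
        ≤ 16^(i+1) * (i+1)^2 := by
      have e1 : (2*(2*i+1)*Nat.centralBinom i)^2 * (2*i+3)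
          = (4 * (Nat.centralBinom i)^2) * ((2*i+1) * ((2*i+1)*(2*i+3))) := by ring
      have e2 : (2*i+1)*(2*i+3) ≤ (2*i+2)^2 := by nlinarith
      calc (2*(2*i+1)*Nat.centralBinom i)^2 * (2*i+3)
          = (4 * (Nat.centralBinom i)^2) * ((2*i+1) * ((2*i+1)*(2*i+3))) := e1
        _ ≤ (4 * (Nat.centralBinom i)^2) * ((2*i+1) * (2*i+2)^2) :=
            Nat.mul_le_mul_left _ (Nat.mul_le_mul_left _ e2)
        _ = ((Nat.centralBinom i)^2 * (2*i+1)) * (4 * (2*i+2)^2) := by ring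
        _ ≤ 16^i * (4 * (2*i+2)^2) := Nat.mul_le_mul_right _ ih
        _ = 16^(i+1) * (i+1)^2 := by ring
    have := hsq.trans_le hineq
    have hpos : 0 < (i+1)^2 := by positivity
    calc (Nat.centralBinom (i+1))^2 * (2*(i+1)+1)
        ≤ 16^(i+1) := by
          by_contra hc
          push_neg at hc
          have : (i+1)^2 * (16^(i+1) + 1) ≤ (i+1)^2 * ((Nat.centralBinom (i+1))^2 * (2*(i+1)+1)) :=
            Nat.mul_le_mul_left _ (by omega)
          nlinarith

lemma gamma_tendsto :
    Tendsto (fun j : ℕ => (Nat.centralBinom j : ℝ) / 4^j) atTop (𝓝 0) := by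
  have hbound : ∀ j : ℕ, (Nat.centralBinom j : ℝ) / 4^j ≤ Real.sqrt (1/(2*(j:ℝ)+1)) := by
    intro j
    have hsq : ((Nat.centralBinom j : ℝ) / 4^j)^2 ≤ 1/(2*(j:ℝ)+1) := by
      have hcast : ((Nat.centralBinom j)^2 * (2*j+1) : ℝ) ≤ (16^j : ℝ) := by
        exact_mod_cast SB j
      have h16 : ((4:ℝ)^j)^2 = 16^j := by
        rw [← pow_mul, mul_comm j 2, pow_mul]; norm_num
      rw [div_pow, h16, div_le_div_iff₀ (by positivity) (by positivity)]
      push_cast at hcast ⊢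
      nlinarith
    have hnn : (0:ℝ) ≤ (Nat.centralBinom j : ℝ) / 4^j := by positivity
    calc (Nat.centralBinom j : ℝ) / 4^j
        = Real.sqrt (((Nat.centralBinom j : ℝ) / 4^j)^2) := (Real.sqrt_sq hnn).symm
      _ ≤ Real.sqrt (1/(2*(j:ℝ)+1)) := Real.sqrt_le_sqrt hsq
  apply squeeze_zero (fun j => by positivity) hbound
  have h1 : Tendsto (fun j : ℕ => 1/(2*(j:ℝ)+1)) atTop (𝓝 0) := by
    apply Tendsto.comp tendsto_inv_atTop_zero ?_ |>.congr (fun j => by rw [Function.comp_apply, one_div])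
    apply tendsto_atTop_add_const_right
    exact (tendsto_natCast_atTop_atTop (R := ℝ)).const_mul_atTop (by norm_num)
  have := h1.sqrt
  simpa [Real.sqrt_zero] using this

lemma ennreal_gamma_tendsto (N : ℕ) :
    Tendsto (fun j : ℕ => (2:ℝ≥0∞)^N * ((Nat.centralBinom j : ℝ≥0∞) / 4^j))
      atTop (𝓝 0) := by
  have heq : ∀ j : ℕ, ((Nat.centralBinom j : ℝ≥0∞) / 4^j)
      = ENNReal.ofReal ((Nat.centralBinom j : ℝ) / 4^j) := by
    intro j
    rw [ENNReal.ofReal_div_of_pos (by positivity), ENNReal.ofReal_natCast,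
      ENNReal.ofReal_pow (by norm_num), ENNReal.ofReal_ofNat]
  have h0 : Tendsto (fun j : ℕ => (Nat.centralBinom j : ℝ≥0∞) / 4^j) atTop (𝓝 0) := by
    simp only [heq]
    have := ENNReal.tendsto_ofReal (gamma_tendsto)
    simpa using this
  have := ENNReal.Tendsto.const_mul h0 (Or.inr (by norm_num : (2:ℝ≥0∞)^N ≠ ⊤))
  simpa using this

lemma om_up {l N : ℕ} (hlN : l ≤ N) (j : ℕ) :
    om j l ≤ (2:ℝ≥0∞)^N * ((Nat.centralBinom j : ℝ≥0∞) / 4^j) := by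
  have hnat : Nat.choose (l + 2*j) j ≤ 2^N * Nat.centralBinom j := by
    calc Nat.choose (l + 2*j) j ≤ 2^l * Nat.centralBinom j := choose_le_two_pow l j
      _ ≤ 2^N * Nat.centralBinom j :=
          Nat.mul_le_mul_right _ (Nat.pow_le_pow_right (by omega) hlN)
  rw [om]
  calc (Nat.choose (l + 2*j) j : ℝ≥0∞) / 4^j
      ≤ ((2^N * Nat.centralBinom j : ℕ) : ℝ≥0∞) / 4^j :=
        ENNReal.div_le_div_right (Nat.cast_le.2 hnat) _
    _ = (2:ℝ≥0∞)^N * ((Nat.centralBinom j : ℝ≥0∞) / 4^j) := by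
        push_cast
        rw [mul_div_assoc]


lemma inv_iter (μ : MeasureTheory.Measure ℝ) (h1 : 0 < lam) (h2 : lam < 1)
    (hinv : ∀ A : Set ℝ, MeasurableSet A → μ (Flam lam ⁻¹' A) = μ A) :
    ∀ (j : ℕ) (B : Set ℝ), MeasurableSet B → μ ((Flam lam)^[j] ⁻¹' B) = μ B := by
  intro j
  induction j with
  | zero => intro B hB; simp
  | succ j ih =>
    intro B hB
    rw [Function.iterate_succ, Set.preimage_comp, hinv _ (((flam_meas h1 h2).iterate j) hB),
      ih B hB]

lemma part2 (h1 : 0 < lam) (h2 : lam < 1)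
    (hm : IsProbabilityMeasure m)
    (hmain : ∀ (j : ℕ) (B : Set ℝ), MeasurableSet B → B ⊆ Set.Ioc 0 1 →
      m ((Flam lam)^[j] ⁻¹' B) = ∫⁻ x in B, om j (idxF lam x) ∂m) :
    ¬ ∃ μ : MeasureTheory.Measure ℝ, IsProbabilityMeasure μ ∧ μ (Set.Ioc 0 1) = 1 ∧
      (∀ A : Set ℝ, MeasurableSet A → μ (Flam lam ⁻¹' A) = μ A) ∧ μ ≪ m := by
  rintro ⟨μ, hμp, hμ1, hμinv, hμac⟩
  -- key claim : μ (Ioc 0 (lam^N)) = 1 for every N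
  have key : ∀ N : ℕ, μ (Set.Ioc 0 (lam ^ N)) = 1 := by
    intro N
    set CN : Set ℝ := Set.Ioc (lam ^ N) 1 with hCN
    set D : ℕ → Set ℝ := fun j => (Flam lam)^[j] ⁻¹' CN with hD
    have hCNmeas : MeasurableSet CN := measurableSet_Ioc
    have hCN1 : CN ⊆ Set.Ioc 0 1 := Set.Ioc_subset_Ioc_left (pow_pos h1 N).le
    have hDmeas : ∀ j, MeasurableSet (D j) := fun j => ((flam_meas h1 h2).iterate j) hCNmeas
    -- m (D j) bound and convergence to 0
    have hDval : ∀ j, m (D j) ≤ (2:ℝ≥0∞)^N * ((Nat.centralBinom j : ℝ≥0∞) / 4^j) := by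
      intro j
      rw [hD, hmain j CN hCNmeas hCN1]
      have hpt : ∀ x ∈ CN, om j (idxF lam x)
          ≤ (2:ℝ≥0∞)^N * ((Nat.centralBinom j : ℝ≥0∞) / 4^j) := by
        intro x hx
        have hidx : idxF lam x ≤ N := Nat.sInf_le hx.1
        exact om_up hidx j
      calc ∫⁻ x in CN, om j (idxF lam x) ∂m
          ≤ ∫⁻ _ in CN, (2:ℝ≥0∞)^N * ((Nat.centralBinom j : ℝ≥0∞) / 4^j) ∂m :=
            setLIntegral_mono' hCNmeas hpt
        _ = ((2:ℝ≥0∞)^N * ((Nat.centralBinom j : ℝ≥0∞) / 4^j)) * m CN :=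
            setLIntegral_const CN _
        _ ≤ ((2:ℝ≥0∞)^N * ((Nat.centralBinom j : ℝ≥0∞) / 4^j)) * 1 :=
            mul_le_mul_right prob_le_one _
        _ = (2:ℝ≥0∞)^N * ((Nat.centralBinom j : ℝ≥0∞) / 4^j) := mul_one _
    have hDtend : Tendsto (fun j => m (D j)) atTop (𝓝 0) :=
      tendsto_of_tendsto_of_tendsto_of_le_of_le tendsto_const_nhds
        (ennreal_gamma_tendsto N) (fun j => zero_le) hDval
    -- split : μ (Ioc 0 (lam^N)) + μ (D j) = 1
    have hsplit : ∀ j, μ (Set.Ioc 0 (lam ^ N)) + μ (D j) = 1 := by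
      intro j
      have hdisj : Disjoint ((Flam lam)^[j] ⁻¹' (Set.Ioc 0 (lam ^ N))) (D j) :=
        (Set.Ioc_disjoint_Ioc_of_le le_rfl).preimage _
      have hunion : (Flam lam)^[j] ⁻¹' (Set.Ioc 0 (lam ^ N)) ∪ D j = Set.Ioc 0 1 := by
        rw [hD, ← Set.preimage_union,
          Set.Ioc_union_Ioc_eq_Ioc (pow_pos h1 N).le (pow_le_one₀ h1.le h2.le),
          flam_pre_iter h1 h2]
      have hμpre : μ ((Flam lam)^[j] ⁻¹' (Set.Ioc 0 (lam ^ N))) = μ (Set.Ioc 0 (lam ^ N)) :=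
        inv_iter μ h1 h2 hμinv j _ measurableSet_Ioc
      calc μ (Set.Ioc 0 (lam ^ N)) + μ (D j)
          = μ ((Flam lam)^[j] ⁻¹' (Set.Ioc 0 (lam ^ N))) + μ (D j) := by rw [hμpre]
        _ = μ ((Flam lam)^[j] ⁻¹' (Set.Ioc 0 (lam ^ N)) ∪ D j) :=
            (measure_union hdisj (hDmeas j)).symm
        _ = 1 := by rw [hunion, hμ1]
    -- infimum of μ (D j) is 0
    have hiInf : ⨅ j, μ (D j) = 0 := by
      by_contra hne
      have hpos : 0 < ⨅ j, μ (D j) := pos_iff_ne_zero.2 hne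
      have hsel : ∀ i : ℕ, ∃ j, m (D j) < (2⁻¹ : ℝ≥0∞)^i := by
        intro i
        have hp : (0:ℝ≥0∞) < (2⁻¹)^i :=
          ENNReal.pow_pos (ENNReal.inv_pos.2 (by norm_num)) i
        exact (hDtend.eventually (gt_mem_nhds hp)).exists
      choose φ hφ using hsel
      have hsum : ∑' i, m (D (φ i)) ≠ ⊤ := by
        apply ne_top_of_le_ne_top (b := ∑' i : ℕ, (2⁻¹ : ℝ≥0∞)^i)
        · rw [ENNReal.tsum_geometric]
          intro hc
          rw [ENNReal.inv_eq_top] at hc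
          have h12 : (1:ℝ≥0∞) - 2⁻¹ = 2⁻¹ := by
            rw [ENNReal.sub_eq_of_eq_add (by norm_num)]
            rw [ENNReal.inv_two_add_inv_two]
          rw [h12] at hc
          simp at hc
        · exact ENNReal.tsum_le_tsum (fun i => (hφ i).le)
      have h0 : m (limsup (fun i => D (φ i)) atTop) = 0 :=
        measure_limsup_atTop_eq_zero hsum
      have hμ0 : μ (limsup (fun i => D (φ i)) atTop) = 0 := hμac h0
      have hμlow : (⨅ j, μ (D j)) ≤ μ (limsup (fun i => D (φ i)) atTop) := by
        rw [limsup_eq_iInf_iSup_of_nat]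
        simp only [Set.iInf_eq_iInter, Set.iSup_eq_iUnion]
        have hmeasU : ∀ n : ℕ, NullMeasurableSet (⋃ i, ⋃ (_ : i ≥ n), D (φ i)) μ :=
          fun n => (MeasurableSet.iUnion fun i =>
            MeasurableSet.iUnion fun _ => hDmeas (φ i)).nullMeasurableSet
        have hanti : Antitone (fun n : ℕ => ⋃ i, ⋃ (_ : i ≥ n), D (φ i)) := by
          intro a b hab
          exact Set.iUnion₂_mono' fun i hi => ⟨i, by omega, subset_rfl⟩
        rw [Directed.measure_iInter hmeasU hanti.directed_ge ⟨0, measure_ne_top μ _⟩]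
        apply le_iInf
        intro n
        calc (⨅ j, μ (D j)) ≤ μ (D (φ n)) := iInf_le _ _
          _ ≤ μ (⋃ i, ⋃ (_ : i ≥ n), D (φ i)) :=
              measure_mono (Set.subset_iUnion₂ (s := fun i _ => D (φ i)) n le_rfl)
      rw [hμ0] at hμlow
      exact hne (le_antisymm hμlow zero_le)
    -- conclude
    have := ENNReal.add_iInf (a := μ (Set.Ioc 0 (lam ^ N))) (f := fun j => μ (D j))
    rw [hiInf, add_zero] at this
    rw [this]
    simp only [hsplit]
    exact iInf_const
  -- final contradiction
  have hinter : (⋂ N : ℕ, Set.Ioc (0:ℝ) (lam ^ N)) = ∅ := by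
    ext x
    simp only [Set.mem_iInter, Set.mem_Ioc, Set.mem_empty_iff_false, iff_false, not_forall]
    by_contra hc
    push_neg at hc
    obtain ⟨n, hn⟩ := exists_pow_lt_of_lt_one (hc 0).1 h2
    exact absurd ((hc n).2) (not_le.2 hn)
  have hmono : Antitone (fun N : ℕ => Set.Ioc (0:ℝ) (lam ^ N)) := by
    intro a b hab
    exact Set.Ioc_subset_Ioc_right (pow_le_pow_of_le_one h1.le h2.le hab)
  have hfin := Directed.measure_iInter (μ := μ)
    (fun N : ℕ => (measurableSet_Ioc).nullMeasurableSet)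
    hmono.directed_ge ⟨0, measure_ne_top μ _⟩
  rw [hinter] at hfin
  simp only [key] at hfin
  rw [iInf_const] at hfin
  simp at hfin


end S10

/-- For `lam^t = 1/2`, the `(t, log ψ(t))`-conformal probability measure
`m` with `m(W k) = (1/2)^k` is conservative, but admits no absolutely continuous
`F_lam`-invariant probability measure: the system is null recurrent. -/
theorem stmt10 (lam t : ℝ) (h1 : 0 < lam) (h2 : lam < 1) (ht : 0 < t)
    (hl : lam ^ t = 1/2)
    (m : Measure ℝ) (hm : IsProbabilityMeasure m) (hm1 : m (Set.Ioc 0 1) = 1)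
    (hconf : IsConformal lam t (Real.log ((1-lam)^t / (1 - lam^t))) m)
    (hmass : ∀ k : ℕ, 1 ≤ k → m (Wint lam k) = ENNReal.ofReal ((1/2)^k)) :
    (∀ A : Set ℝ, MeasurableSet A → A ⊆ Set.Ioc 0 1 → IsWanderingSet lam A →
      m A = 0) ∧
    ¬ ∃ μ : Measure ℝ, IsProbabilityMeasure μ ∧ μ (Set.Ioc 0 1) = 1 ∧
      (∀ A : Set ℝ, MeasurableSet A → μ (Flam lam ⁻¹' A) = μ A) ∧ μ ≪ m := by
  constructor
  · exact S10.part1 h1 h2 hl hm (S10.main h1 h2 hl hconf)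
  · exact S10.part2 h1 h2 hm (S10.main h1 h2 hl hconf)
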